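/- Let n, d ≥ 1, L > 0, β > 0, and x₁,…,x_n ∈ ℝ^d with ‖xᵢ‖₂ ≤ 2L. For a label vector y ∈ {0,1}ⁿ and w ∈ ℝ^d, let θ̂(y,w) ∈ Θ_B be the unique minimizer over Θ_B of F_y(θ) + (β/2)‖θ‖₂² + wᵀθ, where F_y(θ) = −Σ_{i=1}^n [ yᵢ·log σ(xᵢᵀθ) + (1−yᵢ)·log(1−σ(xᵢᵀθ)) ], and let μ_y be the pushforward of the Gaussian measure N(0, σ²·I_d) on ℝ^d under w ↦ θ̂(y,w). If ε > 0, δ ∈ (0,1), and σ ≥ L·√(8·log(2/δ) + 4ε)/ε, then for all y, y' ∈ {0,1}ⁿ differing in exactly one coordinate and all measurable S ⊆ ℝ^d, μ_y(S) ≤ e^ε·μ_{y'}(S) + δ. -/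

import Mathlib

open MeasureTheory ProbabilityTheory Real
open scoped NNReal ENNReal

/-- The sigmoid function `σ(z) = 1/(1+e^{−z})`. -/
noncomputable def sigmoid (z : ℝ) : ℝ := 1 / (1 + Real.exp (-z))

/-- The parameter set `Θ_B = {θ ∈ ℝ^d : ⟨1, θ⟩ = 0, ‖θ‖ ≤ B}`. -/
def Theta (d : ℕ) (B : ℝ) : Set (EuclideanSpace ℝ (Fin d)) :=
  {θ | (∑ j, θ j) = 0 ∧ ‖θ‖ ≤ B}

/-- The isotropic Gaussian measure `N(0, σ²·I_d)` on `ℝ^d`, i.e. the product of `d`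
centered real Gaussians of variance `σ²`. -/
noncomputable def gaussianPi (d : ℕ) (σ : ℝ) : Measure (EuclideanSpace ℝ (Fin d)) :=
  (Measure.pi fun _ : Fin d => gaussianReal 0 ⟨σ^2, sq_nonneg σ⟩).map
    (MeasurableEquiv.toLp 2 (Fin d → ℝ))

/-- Negative log-likelihood `F_y(θ) = −Σᵢ [yᵢ log σ(xᵢᵀθ) + (1−yᵢ) log(1−σ(xᵢᵀθ))]`. -/
noncomputable def nll (d n : ℕ) (x : Fin n → EuclideanSpace ℝ (Fin d))
    (y : Fin n → Bool) (θ : EuclideanSpace ℝ (Fin d)) : ℝ :=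
  -∑ i, (if y i then Real.log (_root_.sigmoid (inner ℝ (x i) θ))
         else Real.log (1 - _root_.sigmoid (inner ℝ (x i) θ)))

/-- The perturbed objective `F_y(θ) + (β/2)‖θ‖² + wᵀθ`. -/
noncomputable def perturbedObj (d n : ℕ) (x : Fin n → EuclideanSpace ℝ (Fin d))
    (y : Fin n → Bool) (β : ℝ) (w θ : EuclideanSpace ℝ (Fin d)) : ℝ :=
  nll d n x y θ + (β/2) * ‖θ‖^2 + inner ℝ w θ



lemma one_add_exp_pos (z : ℝ) : 0 < 1 + Real.exp z := by positivity

lemma sigmoid_pos (z : ℝ) : 0 < _root_.sigmoid z := by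
  unfold _root_.sigmoid; positivity

lemma one_sub_sigmoid (z : ℝ) : 1 - _root_.sigmoid z = Real.exp (-z) * _root_.sigmoid z := by
  unfold _root_.sigmoid
  have h : (1 : ℝ) + Real.exp (-z) ≠ 0 := (one_add_exp_pos (-z)).ne'
  field_simp
  ring

lemma one_sub_sigmoid_pos (z : ℝ) : 0 < 1 - _root_.sigmoid z := by
  rw [one_sub_sigmoid]
  exact mul_pos (Real.exp_pos _) (sigmoid_pos z)

lemma log_one_sub_sigmoid (z : ℝ) :
    Real.log (1 - _root_.sigmoid z) = -z + Real.log (_root_.sigmoid z) := by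
  rw [one_sub_sigmoid, Real.log_mul (Real.exp_ne_zero _) (_root_.sigmoid_pos z).ne',
    Real.log_exp]

lemma neg_log_sigmoid (z : ℝ) :
    -Real.log (_root_.sigmoid z) = Real.log (1 + Real.exp (-z)) := by
  unfold _root_.sigmoid
  rw [one_div, Real.log_inv, neg_neg]

lemma neg_log_one_sub_sigmoid (z : ℝ) :
    -Real.log (1 - _root_.sigmoid z) = Real.log (1 + Real.exp z) := by
  rw [log_one_sub_sigmoid]
  have h : (1 : ℝ) + Real.exp z = Real.exp z * (1 + Real.exp (-z)) := by
    rw [mul_add, mul_one, ← Real.exp_add]; simp [add_comm]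
  rw [h, Real.log_mul (Real.exp_ne_zero _) (one_add_exp_pos (-z)).ne', Real.log_exp,
    ← neg_log_sigmoid]
  ring

lemma convexOn_log1exp : ConvexOn ℝ Set.univ (fun z : ℝ => Real.log (1 + Real.exp z)) := by
  have hd1 : ∀ x : ℝ, HasDerivAt (fun z : ℝ => 1 + Real.exp z) (Real.exp x) x :=
    fun x => (Real.hasDerivAt_exp x).const_add 1
  refine convexOn_of_hasDerivWithinAt2_nonneg (f' := fun z => Real.exp z / (1 + Real.exp z))
    (f'' := fun z => Real.exp z / (1 + Real.exp z) ^ 2) convex_univ ?_ ?_ ?_ ?_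
  · exact (Continuous.log ((continuous_const.add Real.continuous_exp))
      (fun x => (one_add_exp_pos x).ne')).continuousOn
  · intro x _
    exact ((hd1 x).log (one_add_exp_pos x).ne').hasDerivWithinAt
  · intro x _
    have h := (Real.hasDerivAt_exp x).div (hd1 x) (one_add_exp_pos x).ne'
    have heq : (Real.exp x * (1 + Real.exp x) - Real.exp x * Real.exp x) / (1 + Real.exp x) ^ 2
        = Real.exp x / (1 + Real.exp x) ^ 2 := by ring_nf
    rw [heq] at h
    exact h.hasDerivWithinAt
  · intro x _; positivity



section Convexity

variable {d n : ℕ} {x : Fin n → EuclideanSpace ℝ (Fin d)} {y : Fin n → Bool}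

lemma nll_eq (θ : EuclideanSpace ℝ (Fin d)) :
    nll d n x y θ
      = ∑ i, Real.log (1 + Real.exp ((if y i then (-1:ℝ) else 1) * inner ℝ (x i) θ)) := by
  unfold nll
  rw [← Finset.sum_neg_distrib]
  refine Finset.sum_congr rfl fun i _ => ?_
  by_cases h : y i
  · simp only [h, if_true, neg_log_sigmoid, neg_one_mul]
  · simp only [h, if_false, Bool.false_eq_true, neg_log_one_sub_sigmoid, one_mul]

lemma convexOn_comp_inner (v : EuclideanSpace ℝ (Fin d)) {g : ℝ → ℝ}
    (hg : ConvexOn ℝ Set.univ g) :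
    ConvexOn ℝ Set.univ (fun θ : EuclideanSpace ℝ (Fin d) => g (inner ℝ v θ)) := by
  refine ⟨convex_univ, fun θ₁ _ θ₂ _ a b ha hb hab => ?_⟩
  have h : (inner ℝ v (a • θ₁ + b • θ₂) : ℝ) = a * inner ℝ v θ₁ + b * inner ℝ v θ₂ := by
    rw [inner_add_right, real_inner_smul_right, real_inner_smul_right]
  dsimp only
  rw [h]
  simpa [smul_eq_mul] using
    hg.2 (Set.mem_univ (inner ℝ v θ₁ : ℝ)) (Set.mem_univ (inner ℝ v θ₂ : ℝ)) ha hb hab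

lemma convexOn_finset_sum {ι : Type*} (s : Finset ι)
    (f : ι → EuclideanSpace ℝ (Fin d) → ℝ) (h : ∀ i ∈ s, ConvexOn ℝ Set.univ (f i)) :
    ConvexOn ℝ Set.univ (fun θ => ∑ i ∈ s, f i θ) := by
  classical
  induction s using Finset.induction_on with
  | empty => simpa using convexOn_const 0 convex_univ
  | @insert a s ha ih =>
      simp only [Finset.sum_insert ha]
      exact (h a (Finset.mem_insert_self a s)).add
        (ih fun i hi => h i (Finset.mem_insert_of_mem hi))

lemma convexOn_nll : ConvexOn ℝ Set.univ (nll d n x y) := by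
  have h : nll d n x y = fun θ =>
      ∑ i, Real.log (1 + Real.exp ((if y i then (-1:ℝ) else 1) * inner ℝ (x i) θ)) :=
    funext fun θ => nll_eq θ
  rw [h]
  refine convexOn_finset_sum _ _ fun i _ => ?_
  have := convexOn_comp_inner ((if y i then (-1:ℝ) else 1) • x i) convexOn_log1exp
  simp only [real_inner_smul_left] at this
  exact this

lemma convexOn_inner_right (w : EuclideanSpace ℝ (Fin d)) :
    ConvexOn ℝ Set.univ (fun θ : EuclideanSpace ℝ (Fin d) => (inner ℝ w θ : ℝ)) := by
  refine ⟨convex_univ, fun θ₁ _ θ₂ _ a b ha hb hab => ?_⟩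
  dsimp only
  rw [inner_add_right, real_inner_smul_right, real_inner_smul_right]
  simp [smul_eq_mul]

lemma strictConvexOn_normSq {β : ℝ} (hβ : 0 < β) :
    StrictConvexOn ℝ Set.univ (fun θ : EuclideanSpace ℝ (Fin d) => (β/2) * ‖θ‖^2) := by
  refine ⟨convex_univ, fun θ₁ _ θ₂ _ hne a b ha hb hab => ?_⟩
  have e1 : ‖a • θ₁ + b • θ₂‖^2
      = a^2*‖θ₁‖^2 + 2*(a*b)*(inner ℝ θ₁ θ₂ : ℝ) + b^2*‖θ₂‖^2 := by
    rw [norm_add_sq_real, norm_smul, norm_smul, real_inner_smul_left, real_inner_smul_right]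
    rw [Real.norm_eq_abs, Real.norm_eq_abs, abs_of_pos ha, abs_of_pos hb]
    ring
  have e2 : ‖θ₁ - θ₂‖^2 = ‖θ₁‖^2 - 2*(inner ℝ θ₁ θ₂ : ℝ) + ‖θ₂‖^2 := norm_sub_sq_real θ₁ θ₂
  have e3 : 0 < ‖θ₁ - θ₂‖^2 := by
    have hne' : θ₁ - θ₂ ≠ 0 := sub_ne_zero.2 hne
    exact pow_pos (norm_pos_iff.mpr hne') 2
  simp only [smul_eq_mul]
  have hb' : b = 1 - a := by linarith
  subst hb'
  rw [e1]
  have key : a * ‖θ₁‖^2 + (1-a) * ‖θ₂‖^2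
      - (a^2*‖θ₁‖^2 + 2*(a*(1-a))*(inner ℝ θ₁ θ₂ : ℝ) + (1-a)^2*‖θ₂‖^2)
      = a*(1-a)*‖θ₁ - θ₂‖^2 := by rw [e2]; ring
  nlinarith [mul_pos hβ (mul_pos (mul_pos ha hb) e3)]

lemma convex_Theta (d : ℕ) (B : ℝ) : Convex ℝ (Theta d B) := by
  intro θ₁ h1 θ₂ h2 a b ha hb hab
  constructor
  · have : ∀ j, (a • θ₁ + b • θ₂) j = a * θ₁ j + b * θ₂ j := fun j => rfl
    simp only [this, Finset.sum_add_distrib, ← Finset.mul_sum, h1.1, h2.1, mul_zero, add_zero]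
  · calc ‖a • θ₁ + b • θ₂‖ ≤ ‖a • θ₁‖ + ‖b • θ₂‖ := norm_add_le _ _
    _ = a * ‖θ₁‖ + b * ‖θ₂‖ := by
        rw [norm_smul, norm_smul, Real.norm_eq_abs, Real.norm_eq_abs,
          abs_of_nonneg ha, abs_of_nonneg hb]
    _ ≤ a * B + b * B := by
        gcongr
        exacts [h1.2, h2.2]
    _ = B := by rw [← add_mul, hab, one_mul]

lemma strictConvexOn_obj {β : ℝ} (hβ : 0 < β) (B : ℝ) (w : EuclideanSpace ℝ (Fin d)) :
    StrictConvexOn ℝ (Theta d B) (perturbedObj d n x y β w) := by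
  have h : StrictConvexOn ℝ Set.univ (perturbedObj d n x y β w) := by
    have h1 := (convexOn_nll (d := d) (n := n) (x := x) (y := y)).add_strictConvexOn
      (strictConvexOn_normSq hβ)
    have h2 := h1.add_convexOn (convexOn_inner_right w)
    exact h2
  exact h.subset (Set.subset_univ _) (convex_Theta d B)

end Convexity

section Reduction

variable {d n : ℕ} {x : Fin n → EuclideanSpace ℝ (Fin d)}

lemma nll_update (y : Fin n → Bool) (i : Fin n) (θ : EuclideanSpace ℝ (Fin d)) :
    nll d n x (Function.update y i (!(y i))) θ
      = nll d n x y θ + (if y i then (1:ℝ) else -1) * inner ℝ (x i) θ := by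
  classical
  set t : Fin n → ℝ := fun j => if y j then Real.log (_root_.sigmoid (inner ℝ (x j) θ))
      else Real.log (1 - _root_.sigmoid (inner ℝ (x j) θ)) with ht
  set z : ℝ := inner ℝ (x i) θ with hz
  set b : ℝ := if !(y i) then Real.log (_root_.sigmoid z) else Real.log (1 - _root_.sigmoid z) with hb
  have hfun : (fun j => if Function.update y i (!(y i)) j
        then Real.log (_root_.sigmoid (inner ℝ (x j) θ))
        else Real.log (1 - _root_.sigmoid (inner ℝ (x j) θ)))
      = Function.update t i b := by
    funext j
    by_cases hji : j = i
    · subst hji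
      rw [Function.update_self, Function.update_self, hb]
    · rw [Function.update_of_ne hji, Function.update_of_ne hji]
  have hsum : nll d n x (Function.update y i (!(y i))) θ
      = -(b + ∑ j ∈ Finset.univ \ {i}, t j) := by
    rw [nll, hfun, Finset.sum_update_of_mem (Finset.mem_univ i)]
  have hsum2 : nll d n x y θ = -(t i + ∑ j ∈ Finset.univ \ {i}, t j) := by
    rw [nll, ← Finset.erase_eq, Finset.add_sum_erase _ _ (Finset.mem_univ i)]
  rw [hsum, hsum2]
  have hdiff : t i - b = (if y i then (1:ℝ) else -1) * z := by
    by_cases h : y i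
    · simp only [ht, hb, h, if_true, Bool.not_true, if_false, Bool.false_eq_true]
      rw [log_one_sub_sigmoid]
      ring
    · simp only [ht, hb, h, if_false, Bool.not_false, if_true, Bool.false_eq_true]
      rw [log_one_sub_sigmoid]
      ring
  linarith [hdiff]

lemma obj_shift (y : Fin n → Bool) (i : Fin n) (β : ℝ)
    (w θ : EuclideanSpace ℝ (Fin d)) :
    perturbedObj d n x (Function.update y i (!(y i))) β
        (w + (if y i then (-1:ℝ) else 1) • x i) θ
      = perturbedObj d n x y β w θ := by
  unfold perturbedObj
  rw [nll_update y i θ, inner_add_left, real_inner_smul_left]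
  by_cases h : y i <;> simp [h] <;> ring

lemma that_shift {B β : ℝ} (hβ : 0 < β) (hB : 0 < B)
    (that : (Fin n → Bool) → EuclideanSpace ℝ (Fin d) → EuclideanSpace ℝ (Fin d))
    (hmin : ∀ y w, that y w ∈ Theta d B ∧
      ∀ θ ∈ Theta d B, perturbedObj d n x y β w (that y w) ≤ perturbedObj d n x y β w θ)
    (y : Fin n → Bool) (i : Fin n) (w : EuclideanSpace ℝ (Fin d)) :
    that y w = that (Function.update y i (!(y i))) (w + (if y i then (-1:ℝ) else 1) • x i) := by
  set y' := Function.update y i (!(y i))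
  set w' := w + (if y i then (-1:ℝ) else 1) • x i
  obtain ⟨hmem1, hmin1⟩ := hmin y w
  obtain ⟨hmem2, hmin2⟩ := hmin y' w'
  have hobj : ∀ θ, perturbedObj d n x y' β w' θ = perturbedObj d n x y β w θ :=
    fun θ => obj_shift y i β w θ
  have hsc := strictConvexOn_obj (x := x) (y := y) hβ B w
  refine hsc.eq_of_isMinOn ?_ ?_ hmem1 hmem2
  · exact isMinOn_iff.mpr fun θ hθ => hmin1 θ hθ
  · refine isMinOn_iff.mpr fun θ hθ => ?_
    rw [← hobj, ← hobj]
    exact hmin2 θ hθ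

end Reduction


lemma lintegral_pi_prod : ∀ (d : ℕ) (μ : Fin d → Measure ℝ), (∀ j, SigmaFinite (μ j)) →
    ∀ (f : Fin d → ℝ → ℝ≥0∞), (∀ j, Measurable (f j)) →
    ∫⁻ w, ∏ j, f j (w j) ∂(Measure.pi μ) = ∏ j, ∫⁻ x, f j x ∂(μ j) := by
  intro d
  induction d with
  | zero =>
      intro μ _ f _
      simp only [Finset.univ_eq_empty, Finset.prod_empty, lintegral_one]
      haveI : ∀ j, SigmaFinite (μ j) := fun j => j.elim0
      rw [Measure.pi_univ]
      simp
  | succ m ih =>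
      intro μ hσ f hf
      haveI := hσ
      have hmp := (measurePreserving_piFinSuccAbove μ 0).symm
      have hF : Measurable fun w : Fin (m+1) → ℝ => ∏ j, f j (w j) :=
        Finset.measurable_prod _ fun j _ => (hf j).comp (measurable_pi_apply j)
      rw [← hmp.lintegral_comp (f := fun w : Fin (m+1) → ℝ => ∏ j, f j (w j)) hF]
      have heq : ∀ p : ℝ × (Fin m → ℝ),
          (∏ j, f j (((MeasurableEquiv.piFinSuccAbove (fun _ => ℝ) 0).symm p) j))
            = f 0 p.1 * ∏ j : Fin m, f (Fin.succ j) (p.2 j) := by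
        rintro ⟨a, g⟩
        rw [Fin.prod_univ_succ]
        have h0 : ((MeasurableEquiv.piFinSuccAbove (fun _ : Fin (m+1) => ℝ) 0).symm (a, g)) 0
            = a := by simp [MeasurableEquiv.piFinSuccAbove_symm_apply]
        have hs : ∀ j : Fin m,
            ((MeasurableEquiv.piFinSuccAbove (fun _ : Fin (m+1) => ℝ) 0).symm (a, g)) j.succ
              = g j := by
          intro j
          simp [MeasurableEquiv.piFinSuccAbove_symm_apply, Fin.zero_succAbove]
        rw [h0]
        exact congrArg _ (Finset.prod_congr rfl fun j _ => by rw [hs j])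
      simp_rw [heq]
      rw [lintegral_prod_mul (f := f 0)
        (g := fun g : Fin m → ℝ => ∏ j : Fin m, f j.succ (g j)) (hf 0).aemeasurable
        ((Finset.measurable_prod _
          (fun j _ => (hf (Fin.succ j)).comp (measurable_pi_apply j))).aemeasurable)]
      rw [ih _ (fun j => hσ _) _ (fun j => hf (Fin.succ j))]
      rw [Fin.prod_univ_succ]
      simp [Fin.zero_succAbove]

lemma indicator_pi_prod {d : ℕ} (s : Fin d → Set ℝ) (g : Fin d → ℝ → ℝ≥0∞)
    (w : Fin d → ℝ) :
    (Set.univ.pi s).indicator (fun w => ∏ j, g j (w j)) w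
      = ∏ j, (s j).indicator (g j) (w j) := by
  classical
  by_cases hw : w ∈ Set.univ.pi s
  · rw [Set.indicator_of_mem hw]
    exact (Finset.prod_congr rfl fun j _ =>
      (Set.indicator_of_mem (hw j (Set.mem_univ j)) _).symm)
  · rw [Set.indicator_of_notMem hw]
    have hex : ∃ j, w j ∉ s j := by
      by_contra h
      push_neg at h
      exact hw fun j _ => h j
    obtain ⟨j, hj⟩ := hex
    exact (Finset.prod_eq_zero (Finset.mem_univ j)
      (Set.indicator_of_notMem hj _)).symm

lemma pi_gaussian_eq {d : ℕ} (m : Fin d → ℝ) (V : ℝ≥0) (hV : V ≠ 0) :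
    Measure.pi (fun j => gaussianReal (m j) V)
      = (Measure.pi fun _ : Fin d => (volume : Measure ℝ)).withDensity
          (fun w => ∏ j, gaussianPDF (m j) V (w j)) := by
  refine (Measure.pi_eq (μ := fun j => gaussianReal (m j) V)
    (μ' := (Measure.pi fun _ : Fin d => (volume : Measure ℝ)).withDensity
      (fun w => ∏ j, gaussianPDF (m j) V (w j))) fun s hs => ?_)
  rw [withDensity_apply _ (MeasurableSet.univ_pi hs)]
  rw [← lintegral_indicator (MeasurableSet.univ_pi hs)]
  have heq : ∀ w, (Set.univ.pi s).indicator
        (fun w => ∏ j, gaussianPDF (m j) V (w j)) w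
      = ∏ j, (s j).indicator (gaussianPDF (m j) V) (w j) := indicator_pi_prod s _
  simp_rw [heq]
  rw [lintegral_pi_prod d _ (fun j => inferInstance) _
    (fun j => (measurable_gaussianPDF _ _).indicator (hs j))]
  refine Finset.prod_congr rfl fun j _ => ?_
  rw [lintegral_indicator (hs j), gaussianReal_apply _ hV]

lemma pi_gaussian_map_add {d : ℕ} (V : ℝ≥0) (u : Fin d → ℝ) :
    (Measure.pi fun _ : Fin d => gaussianReal 0 V).map (· + u)
      = Measure.pi fun j => gaussianReal (u j) V := by
  refine Measure.pi_eq (μ := fun j => gaussianReal (u j) V)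
    (μ' := (Measure.pi fun _ : Fin d => gaussianReal 0 V).map (· + u))
    (fun s hs => ?_) |>.symm
  have hm : Measurable fun w : Fin d → ℝ => w + u :=
    measurable_add_const u
  rw [Measure.map_apply hm (MeasurableSet.univ_pi hs)]
  have hpre : (fun w : Fin d → ℝ => w + u) ⁻¹' (Set.univ.pi s)
      = Set.univ.pi fun j => (· + u j) ⁻¹' (s j) := by
    ext w
    simp [Set.mem_pi, Pi.add_apply]
  rw [hpre, Measure.pi_pi]
  refine Finset.prod_congr rfl fun j _ => ?_
  rw [show (fun x : ℝ => x + u j) ⁻¹' s j = (· + u j) ⁻¹' s j from rfl,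
    ← Measure.map_apply (measurable_add_const (u j)) (hs j),
    gaussianReal_map_add_const (u j), zero_add]

lemma gaussianPDFReal_complete_square (V : ℝ≥0) (hV : V ≠ 0) (c x : ℝ) :
    gaussianPDFReal 0 V x * Real.exp (c * x)
      = Real.exp (c^2 * V / 2) * gaussianPDFReal (c * V) V x := by
  have hV' : (V : ℝ) ≠ 0 := by exact_mod_cast hV
  have key : Real.exp (-(x - 0) ^ 2 / (2 * (V:ℝ)) + c * x)
      = Real.exp (c^2 * (V:ℝ) / 2) * Real.exp (-(x - c * (V:ℝ)) ^ 2 / (2 * (V:ℝ))) := by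
    rw [← Real.exp_add]
    congr 1
    field_simp
    ring
  unfold gaussianPDFReal
  rw [mul_assoc, ← Real.exp_add, key]
  ring

lemma integrable_exp_mul_gaussianReal (V : ℝ≥0) (hV : V ≠ 0) (c : ℝ) :
    Integrable (fun t => Real.exp (c * t)) (gaussianReal 0 V) := by
  rw [gaussianReal_of_var_ne_zero _ hV, gaussianPDF_def]
  have hmeas : Measurable fun x => (gaussianPDFReal 0 V x).toNNReal :=
    (measurable_gaussianPDFReal 0 V).real_toNNReal
  rw [show (fun x => ENNReal.ofReal (gaussianPDFReal 0 V x))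
      = fun x => ((gaussianPDFReal 0 V x).toNNReal : ℝ≥0∞) from rfl]
  rw [integrable_withDensity_iff_integrable_smul hmeas]
  have heq : (fun x => ((gaussianPDFReal 0 V x).toNNReal : ℝ) • Real.exp (c * x))
      = fun x => Real.exp (c^2 * V / 2) * gaussianPDFReal (c * V) V x := by
    funext x
    rw [smul_eq_mul, Real.coe_toNNReal _ (gaussianPDFReal_nonneg 0 V x),
      gaussianPDFReal_complete_square V hV c x]
  rw [show (fun x => ((gaussianPDFReal 0 V x).toNNReal : ℝ≥0) • Real.exp (c * x))
      = fun x => Real.exp (c^2 * V / 2) * gaussianPDFReal (c * V) V x from heq]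
  exact (integrable_gaussianPDFReal (c * V) V).const_mul _

lemma integral_exp_mul_gaussianReal (V : ℝ≥0) (hV : V ≠ 0) (c : ℝ) :
    ∫ t, Real.exp (c * t) ∂(gaussianReal 0 V) = Real.exp (c^2 * V / 2) := by
  rw [gaussianReal_of_var_ne_zero _ hV, gaussianPDF_def]
  have hmeas : Measurable fun x => (gaussianPDFReal 0 V x).toNNReal :=
    (measurable_gaussianPDFReal 0 V).real_toNNReal
  rw [show (fun x => ENNReal.ofReal (gaussianPDFReal 0 V x))
      = fun x => ((gaussianPDFReal 0 V x).toNNReal : ℝ≥0∞) from rfl]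
  rw [integral_withDensity_eq_integral_smul hmeas]
  have heq : (fun x => ((gaussianPDFReal 0 V x).toNNReal : ℝ≥0) • Real.exp (c * x))
      = fun x => Real.exp (c^2 * V / 2) * gaussianPDFReal (c * V) V x := by
    funext x
    rw [NNReal.smul_def, smul_eq_mul, Real.coe_toNNReal _ (gaussianPDFReal_nonneg 0 V x),
      gaussianPDFReal_complete_square V hV c x]
  rw [heq, integral_const_mul, integral_gaussianPDFReal_eq_one _ hV, mul_one]

lemma integral_pi_exp_sum (d : ℕ) (μ : Measure ℝ) [IsProbabilityMeasure μ] (c : Fin d → ℝ)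
    (hint : ∀ r : ℝ, Integrable (fun t => Real.exp (r * t)) μ) :
    (∫ w : Fin d → ℝ, Real.exp (∑ j, c j * w j) ∂(Measure.pi fun _ => μ)
        = ∏ j, ∫ t, Real.exp (c j * t) ∂μ)
      ∧ Integrable (fun w : Fin d → ℝ => Real.exp (∑ j, c j * w j))
          (Measure.pi fun _ => μ) := by
  letI : MeasureSpace ℝ := ⟨μ⟩
  haveI : SigmaFinite (volume : Measure ℝ) := by
    change SigmaFinite μ; infer_instance
  have hvol : (Measure.pi fun _ : Fin d => μ) = (volume : Measure (Fin d → ℝ)) := rfl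
  have hfe : (fun w : Fin d → ℝ => Real.exp (∑ j, c j * w j))
      = fun w => ∏ j, Real.exp (c j * w j) := by
    funext w
    rw [Real.exp_sum]
  constructor
  · rw [hvol, hfe]
    exact integral_fintype_prod_eq_prod (fun j t => Real.exp (c j * t))
  · rw [hvol, hfe]
    exact Integrable.fintype_prod (f := fun j t => Real.exp (c j * t)) (fun j => hint (c j))

lemma pi_gaussian_chernoff (d : ℕ) (V : ℝ≥0) (hV : V ≠ 0) (u : Fin d → ℝ) (a : ℝ)
    (ha : 0 ≤ a) (hM : 0 < ∑ j, (u j)^2) :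
    (Measure.pi fun _ : Fin d => gaussianReal 0 V) {w | a ≤ ∑ j, u j * w j}
      ≤ ENNReal.ofReal (Real.exp (-a^2 / (2 * V * (∑ j, (u j)^2)))) := by
  have hV' : (0:ℝ) < V := by positivity
  set M := ∑ j, (u j)^2 with hMdef
  set ν := Measure.pi fun _ : Fin d => gaussianReal 0 V with hν
  set X : (Fin d → ℝ) → ℝ := fun w => ∑ j, u j * w j with hX
  set s : ℝ := a / (V * M) with hs
  have hs0 : 0 ≤ s := div_nonneg ha (by positivity)
  obtain ⟨hI, hInt⟩ := integral_pi_exp_sum d (gaussianReal 0 V) (fun j => s * u j)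
    (fun r => integrable_exp_mul_gaussianReal V hV r)
  have hexp_eq : (fun w : Fin d → ℝ => Real.exp (s * X w))
      = fun w => Real.exp (∑ j, (s * u j) * w j) := by
    funext w
    rw [hX, Finset.mul_sum]
    congr 1
    exact Finset.sum_congr rfl fun j _ => by ring
  have hIntegrable : Integrable (fun w => Real.exp (s * X w)) ν := by
    rw [hexp_eq]; exact hInt
  have hch := measure_ge_le_exp_mul_mgf (X := X) (μ := ν) a hs0 hIntegrable
  have hmgf : mgf X ν s = Real.exp (s^2 * V * M / 2) := by
    rw [mgf]
    rw [show (fun ω => Real.exp (s * X ω)) = fun w => Real.exp (∑ j, (s * u j) * w j)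
      from hexp_eq] at hIntegrable ⊢
    rw [hI]
    have : ∀ j : Fin d, ∫ t, Real.exp ((s * u j) * t) ∂(gaussianReal 0 V)
        = Real.exp ((s * u j)^2 * V / 2) :=
      fun j => integral_exp_mul_gaussianReal V hV (s * u j)
    rw [Finset.prod_congr rfl fun j _ => this j, ← Real.exp_sum]
    congr 1
    rw [hMdef, Finset.mul_sum, Finset.sum_div]
    exact Finset.sum_congr rfl fun j _ => by ring
  rw [hmgf] at hch
  have hne : ν {ω | a ≤ X ω} ≠ ⊤ := measure_ne_top ν _
  calc ν {w | a ≤ X w} = ENNReal.ofReal ((ν {ω | a ≤ X ω}).toReal) :=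
        (ENNReal.ofReal_toReal hne).symm
    _ ≤ ENNReal.ofReal (Real.exp (-s * a) * Real.exp (s^2 * V * M / 2)) :=
        ENNReal.ofReal_le_ofReal hch
    _ = ENNReal.ofReal (Real.exp (-a^2 / (2 * V * M))) := by
        rw [← Real.exp_add]
        congr 1
        have hVM : (V:ℝ) * M ≠ 0 := by positivity
        rw [hs]
        field_simp
        ring

lemma pi_gaussian_dp (d : ℕ) (V : ℝ≥0) (hV : V ≠ 0) (u : Fin d → ℝ) (ε δ' : ℝ)
    (hM : 0 < ∑ j, (u j)^2)
    (ha : 0 ≤ ε * V - (∑ j, (u j)^2)/2)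
    (htail : Real.exp (-(ε * V - (∑ j, (u j)^2)/2)^2 / (2 * V * (∑ j, (u j)^2))) ≤ δ')
    (A : Set (Fin d → ℝ)) (hA : MeasurableSet A) :
    Measure.pi (fun j => gaussianReal (u j) V) A
      ≤ ENNReal.ofReal (Real.exp ε) * (Measure.pi fun _ : Fin d => gaussianReal 0 V) A
        + ENNReal.ofReal δ' := by
  have hV' : (0:ℝ) < V := by positivity
  set M := ∑ j, (u j)^2 with hMdef
  set X : (Fin d → ℝ) → ℝ := fun w => ∑ j, u j * w j with hXdef
  have hXmeas : Measurable X :=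
    Finset.measurable_sum _ fun j _ => by fun_prop
  set G : Set (Fin d → ℝ) := {w | X w ≤ ε * V + M/2} with hGdef
  have hG : MeasurableSet G := measurableSet_le hXmeas measurable_const
  set νu := Measure.pi (fun j => gaussianReal (u j) V) with hνu
  set ν0 := Measure.pi (fun _ : Fin d => gaussianReal 0 V) with hν0
  have hPu : Measurable fun w : Fin d → ℝ => ∏ j, gaussianPDF (u j) V (w j) :=
    Finset.measurable_prod _ fun j _ =>
      (measurable_gaussianPDF _ _).comp (measurable_pi_apply j)
  have hP0 : Measurable fun w : Fin d → ℝ => ∏ j, gaussianPDF 0 V (w j) :=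
    Finset.measurable_prod _ fun j _ =>
      (measurable_gaussianPDF _ _).comp (measurable_pi_apply j)
  have htail1 : νu Gᶜ ≤ ENNReal.ofReal δ' := by
    have hmeasadd : Measurable fun w : Fin d → ℝ => w + u :=
      measurable_add_const u
    rw [hνu, ← pi_gaussian_map_add V u, Measure.map_apply hmeasadd hG.compl]
    have hsub : (fun w : Fin d → ℝ => w + u) ⁻¹' Gᶜ ⊆ {w | ε*V - M/2 ≤ X w} := by
      intro w hw
      simp only [Set.mem_preimage, Set.mem_compl_iff, G, Set.mem_setOf_eq, not_le] at hw
      have hXadd : X (w + u) = X w + M := by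
        simp only [X, M, Pi.add_apply]
        rw [← Finset.sum_add_distrib]
        exact Finset.sum_congr rfl fun j _ => by ring
      rw [hXadd] at hw
      simp only [Set.mem_setOf_eq]
      linarith
    exact le_trans (measure_mono hsub)
      (le_trans (pi_gaussian_chernoff d V hV u _ ha hM) (ENNReal.ofReal_le_ofReal htail))
  have hpt : ∀ (j : Fin d) (t : ℝ), gaussianPDFReal (u j) V t
      = Real.exp ((u j * t - (u j)^2/2)/V) * gaussianPDFReal 0 V t := by
    intro j t
    have h := gaussianPDFReal_complete_square V hV (u j / V) t
    have hc : (u j / (V:ℝ)) * (V:ℝ) = u j := by field_simp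
    rw [hc] at h
    have hexp : Real.exp ((u j / (V:ℝ))^2 * V / 2) ≠ 0 := Real.exp_ne_zero _
    have h2 : gaussianPDFReal (u j) V t
        = (Real.exp ((u j / (V:ℝ))^2 * V / 2))⁻¹
            * (gaussianPDFReal 0 V t * Real.exp ((u j / V) * t)) := by
      rw [h]
      field_simp
    rw [h2, ← Real.exp_neg, mul_comm (gaussianPDFReal 0 V t), ← mul_assoc, ← Real.exp_add]
    congr 2
    field_simp
    ring
  have hratio : νu (A ∩ G) ≤ ENNReal.ofReal (Real.exp ε) * ν0 (A ∩ G) := by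
    rw [hνu, hν0, pi_gaussian_eq u V hV, pi_gaussian_eq (fun _ => 0) V hV]
    rw [withDensity_apply _ (hA.inter hG), withDensity_apply _ (hA.inter hG)]
    rw [← lintegral_const_mul _ hP0]
    refine setLIntegral_mono (hP0.const_mul _) fun w hw => ?_
    have hprodu : ∏ j, gaussianPDF (u j) V (w j)
        = ENNReal.ofReal (∏ j, gaussianPDFReal (u j) V (w j)) :=
      (ENNReal.ofReal_prod_of_nonneg fun j _ => gaussianPDFReal_nonneg _ _ _).symm
    have hprod0 : ∏ j, gaussianPDF 0 V (w j)
        = ENNReal.ofReal (∏ j, gaussianPDFReal 0 V (w j)) :=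
      (ENNReal.ofReal_prod_of_nonneg fun j _ => gaussianPDFReal_nonneg _ _ _).symm
    rw [hprodu, hprod0, ← ENNReal.ofReal_mul (Real.exp_nonneg ε)]
    refine ENNReal.ofReal_le_ofReal ?_
    have hwG : X w ≤ ε * V + M/2 := hw.2
    have hre : ∏ j, gaussianPDFReal (u j) V (w j)
        = Real.exp ((X w - M/2)/V) * ∏ j, gaussianPDFReal 0 V (w j) := by
      rw [Finset.prod_congr rfl fun j _ => hpt j (w j), Finset.prod_mul_distrib,
        ← Real.exp_sum]
      congr 2
      rw [← Finset.sum_div]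
      congr 1
      rw [Finset.sum_sub_distrib, ← Finset.sum_div]
    rw [hre]
    refine mul_le_mul_of_nonneg_right ?_ (Finset.prod_nonneg fun j _ =>
      gaussianPDFReal_nonneg _ _ _)
    rw [Real.exp_le_exp]
    rw [div_le_iff₀ hV']
    linarith
  calc νu A ≤ νu ((A ∩ G) ∪ Gᶜ) := measure_mono (by
        intro w hw
        by_cases h : w ∈ G
        · exact Or.inl ⟨hw, h⟩
        · exact Or.inr h)
    _ ≤ νu (A ∩ G) + νu Gᶜ := measure_union_le _ _
    _ ≤ ENNReal.ofReal (Real.exp ε) * ν0 (A ∩ G) + ENNReal.ofReal δ' :=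
        add_le_add hratio htail1
    _ ≤ ENNReal.ofReal (Real.exp ε) * ν0 A + ENNReal.ofReal δ' :=
        add_le_add (mul_le_mul' le_rfl (measure_mono Set.inter_subset_left)) le_rfl


lemma dp_arith (L ε δ σv m : ℝ) (hL : 0 < L) (hε : 0 < ε) (hδ0 : 0 < δ) (hδ1 : δ < 1)
    (hm0 : 0 < m) (hm2L : m ≤ 2*L) (hσ0 : 0 < σv)
    (hσ : L * Real.sqrt (8 * Real.log (2/δ) + 4*ε) / ε ≤ σv) :
    0 ≤ ε * σv^2 - m^2/2 ∧
      Real.exp (-(ε * σv^2 - m^2/2)^2 / (2 * σv^2 * m^2)) ≤ δ := by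
  have hl : 0 ≤ Real.log (2/δ) := Real.log_nonneg (by rw [le_div_iff₀ hδ0]; linarith)
  set l := Real.log (2/δ) with hldef
  set c := Real.sqrt (2*l + ε) with hcdef
  have hc2 : c^2 = 2*l + ε := Real.sq_sqrt (by linarith)
  have hc0 : 0 < c := Real.sqrt_pos.mpr (by linarith)
  have hsq : Real.sqrt (8*l + 4*ε) = 2*c := by
    rw [show 8*l+4*ε = (2*c)^2 by rw [mul_pow]; rw [hc2]; ring]
    exact Real.sqrt_sq (by positivity)
  have h1 : 2*L*c ≤ ε*σv := by
    rw [hsq, div_le_iff₀ hε] at hσ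
    nlinarith [hσ]
  have h2 : c*m ≤ ε*σv :=
    le_trans (by nlinarith [mul_le_mul_of_nonneg_left hm2L hc0.le]) h1
  have h3 : c^2*m^2 ≤ ε^2*σv^2 := by
    have := mul_self_le_mul_self (mul_pos hc0 hm0).le h2
    nlinarith [this]
  have hA : 0 ≤ ε*σv^2 - m^2/2 := by nlinarith [h3, hc2, hl, hε, sq_nonneg m]
  refine ⟨hA, ?_⟩
  have hδe : δ = Real.exp (Real.log δ) := (Real.exp_log hδ0).symm
  rw [hδe, Real.exp_le_exp]
  have hlog2 : Real.log δ = Real.log 2 - l := by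
    rw [hldef, Real.log_div two_ne_zero hδ0.ne']; ring
  rw [hlog2]
  have hkey : 2*l*(σv^2*m^2) ≤ (ε*σv^2 - m^2/2)^2 := by
    have hH := mul_le_mul_of_nonneg_left h3 (sq_nonneg σv)
    have hc2' : c^2*(σv^2*m^2) = (2*l+ε)*(σv^2*m^2) := by rw [hc2]
    nlinarith [hH, hc2', sq_nonneg (m^2)]
  have hlog2pos : 0 ≤ Real.log 2 := Real.log_nonneg one_le_two
  have hden : 0 < 2*σv^2*m^2 := by positivity
  have hfrac : l ≤ (ε*σv^2 - m^2/2)^2 / (2*σv^2*m^2) := by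
    rw [le_div_iff₀ hden]
    nlinarith [hkey]
  rw [neg_div]
  linarith [hfrac]

/-- objective perturbation with Gaussian noise is `(ε,δ)`-label DP in the
central model. `that y w` denotes the minimizer `θ̂(y,w)` of the perturbed objective
over `Θ_B`. -/
theorem objective_perturbation_label_dp
    (n d : ℕ) (L B β σv ε δ : ℝ)
    (x : Fin n → EuclideanSpace ℝ (Fin d))
    (hn : 1 ≤ n) (hd : 1 ≤ d) (hL : 0 < L) (hB : 0 < B) (hβ : 0 < β)
    (hx : ∀ i, ‖x i‖ ≤ 2 * L)
    (that : (Fin n → Bool) → EuclideanSpace ℝ (Fin d) → EuclideanSpace ℝ (Fin d))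
    (hmin : ∀ y w, that y w ∈ Theta d B ∧
      ∀ θ ∈ Theta d B, perturbedObj d n x y β w (that y w) ≤ perturbedObj d n x y β w θ)
    (hmeas : ∀ y, Measurable (that y))
    (hε : 0 < ε) (hδ : δ ∈ Set.Ioo (0:ℝ) 1)
    (hσ : L * Real.sqrt (8 * Real.log (2/δ) + 4 * ε) / ε ≤ σv)
    (y y' : Fin n → Bool) (i : Fin n) (hy : y' = Function.update y i (!(y i)))
    (S : Set (EuclideanSpace ℝ (Fin d))) (hS : MeasurableSet S) :
    ((gaussianPi d σv).map (that y)) S ≤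
      ENNReal.ofReal (Real.exp ε) * ((gaussianPi d σv).map (that y')) S
        + ENNReal.ofReal δ := by
  obtain ⟨hδ0, hδ1⟩ := hδ
  have hl : 0 ≤ Real.log (2/δ) := Real.log_nonneg (by rw [le_div_iff₀ hδ0]; linarith)
  have hargpos : 0 < 8 * Real.log (2/δ) + 4 * ε := by linarith
  have hsqrtpos : 0 < Real.sqrt (8 * Real.log (2/δ) + 4 * ε) := Real.sqrt_pos.mpr hargpos
  have hσ0 : 0 < σv := lt_of_lt_of_le (by positivity) hσ
  have hVne : (⟨σv^2, sq_nonneg σv⟩ : ℝ≥0) ≠ 0 := by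
    intro h
    have h2 : σv^2 = 0 := congrArg NNReal.toReal h
    nlinarith
  have hred : ∀ w, that y w = that y' (w + (if y i then (-1:ℝ) else 1) • x i) := by
    intro w; rw [hy]; exact that_shift hβ hB that hmin y i w
  set u : EuclideanSpace ℝ (Fin d) := (if y i then (-1:ℝ) else 1) • x i with hu
  have hnormu : ‖u‖ ≤ 2 * L := by
    rw [hu, norm_smul]
    have h1 : ‖(if y i then (-1:ℝ) else 1)‖ = 1 := by by_cases h : y i <;> simp [h]
    rw [h1, one_mul]; exact hx i
  set e := (MeasurableEquiv.toLp 2 (Fin d → ℝ)).symm with he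
  set u0 : Fin d → ℝ := e u with hu0
  have hadd : ∀ w : Fin d → ℝ, e.symm (w + u0) = e.symm w + u := fun w => rfl
  have hu0j : ∀ j, u0 j = u j := fun j => rfl
  have hA : MeasurableSet ((that y' ∘ ⇑e.symm) ⁻¹' S) :=
    ((hmeas y').comp e.symm.measurable) hS
  have hmeasadd : Measurable fun w : Fin d → ℝ => w + u0 :=
    measurable_add_const u0
  have hgp : gaussianPi d σv
      = (Measure.pi fun _ : Fin d =>
          gaussianReal 0 (⟨σv^2, sq_nonneg σv⟩ : ℝ≥0)).map e.symm := rfl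
  have hLy : ((gaussianPi d σv).map (that y)) S
      = ((Measure.pi fun _ : Fin d =>
            gaussianReal 0 (⟨σv^2, sq_nonneg σv⟩ : ℝ≥0)).map (· + u0))
          ((that y' ∘ ⇑e.symm) ⁻¹' S) := by
    rw [hgp, Measure.map_map (hmeas y) e.symm.measurable,
      Measure.map_apply ((hmeas y).comp e.symm.measurable) hS,
      Measure.map_apply hmeasadd hA]
    congr 1
    ext w
    simp only [Set.mem_preimage, Function.comp_apply]
    rw [hred (e.symm w), hadd w]
  have hLy' : ((gaussianPi d σv).map (that y')) S
      = (Measure.pi fun _ : Fin d => gaussianReal 0 (⟨σv^2, sq_nonneg σv⟩ : ℝ≥0))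
          ((that y' ∘ ⇑e.symm) ⁻¹' S) := by
    rw [hgp, Measure.map_map (hmeas y') e.symm.measurable,
      Measure.map_apply ((hmeas y').comp e.symm.measurable) hS]
  erw [hLy, hLy', pi_gaussian_map_add _ u0]
  have hMnorm : ∑ j, (u0 j)^2 = ‖u‖^2 := by
    rw [EuclideanSpace.norm_eq, Real.sq_sqrt (Finset.sum_nonneg fun j _ => sq_nonneg _)]
    exact Finset.sum_congr rfl fun j _ => by rw [hu0j j, Real.norm_eq_abs, sq_abs]
  by_cases hM0 : ∑ j, (u0 j)^2 = 0
  · have hz : ∀ j, u0 j = 0 := by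
      intro j
      have h1 := (Finset.sum_eq_zero_iff_of_nonneg
        (fun j _ => sq_nonneg (u0 j))).mp hM0 j (Finset.mem_univ j)
      exact pow_eq_zero_iff two_ne_zero |>.mp h1
    have hpi : (Measure.pi fun j => gaussianReal (u0 j) (⟨σv^2, sq_nonneg σv⟩ : ℝ≥0))
        = Measure.pi fun _ : Fin d => gaussianReal 0 (⟨σv^2, sq_nonneg σv⟩ : ℝ≥0) := by
      congr 1
      funext j
      rw [hz j]
    rw [hpi]
    refine le_trans ?_ (self_le_add_right _ _)
    refine le_mul_of_one_le_left (by simp) ?_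
    rw [← ENNReal.ofReal_one]
    exact ENNReal.ofReal_le_ofReal (Real.one_le_exp hε.le)
  · have hM : 0 < ∑ j, (u0 j)^2 :=
      lt_of_le_of_ne (Finset.sum_nonneg fun j _ => sq_nonneg _) (Ne.symm hM0)
    have hm0 : 0 < ‖u‖ := by nlinarith [hMnorm, norm_nonneg u, hM]
    obtain ⟨ha, htail⟩ := dp_arith L ε δ σv ‖u‖ hL hε hδ0 hδ1 hm0 hnormu hσ0 hσ
    refine pi_gaussian_dp d _ hVne u0 ε δ hM ?_ ?_ _ hA
    · rw [hMnorm]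
      exact ha
    · rw [hMnorm]
      exact htail
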